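/- For n ≥ 1, the algebra monomorphisms from A_1 = ℂ to A_n are exactly the maps φ_w(re₀ + se₁) = re₀ + sw for w a pure element of A_n with ‖w‖ = 1: every such φ_w is an algebra monomorphism, and every algebra monomorphism φ : A_1 → A_n equals φ_w for w = φ(e₁). Hence 𝓜(A_1; A_n) is in bijection with the unit sphere S^{2^n−2} of the pure part of A_n. -/

import Mathlib

noncomputable section

/-- The Cayley–Dickson algebra `A n` of dimension `2^n` over `ℝ`:
`A 0 = ℝ` and `A (n+1) = A n × A n`. -/
def CD : ℕ → Type
  | 0 => ℝ
  | n + 1 => CD n × CD n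

namespace CD

instance instAddCommGroup : (n : ℕ) → AddCommGroup (CD n)
  | 0 => inferInstanceAs (AddCommGroup ℝ)
  | n + 1 =>
    letI := instAddCommGroup n
    inferInstanceAs (AddCommGroup (CD n × CD n))

instance instModule : (n : ℕ) → Module ℝ (CD n)
  | 0 => inferInstanceAs (Module ℝ ℝ)
  | n + 1 =>
    letI := instAddCommGroup n
    letI := instModule n
    inferInstanceAs (Module ℝ (CD n × CD n))

/-- Conjugation: `x̄ = x` on `ℝ` and `(x₁,x₂)‾ = (x̄₁, -x₂)`. -/
protected def conj : {n : ℕ} → CD n → CD n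
  | 0, x => x
  | _ + 1, x => (CD.conj x.1, -x.2)

/-- Cayley–Dickson multiplication: `(a,b)(x,y) = (ax - ȳb, ya + bx̄)`. -/
protected def mul : {n : ℕ} → CD n → CD n → CD n
  | 0, x, y => (show ℝ from x) * (show ℝ from y)
  | _ + 1, x, y =>
    (CD.mul x.1 y.1 - CD.mul (CD.conj y.2) x.2,
     CD.mul y.2 x.1 + CD.mul x.2 (CD.conj y.1))

instance instMul (n : ℕ) : Mul (CD n) := ⟨CD.mul⟩

/-- The multiplicative unit `e₀` of `A n`. -/
def e0 : (n : ℕ) → CD n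
  | 0 => (1 : ℝ)
  | n + 1 => (e0 n, 0)

/-- The element `ẽ₀ = (0, e₀)` of `A n` (junk value `0` for `n = 0`). -/
def te0 : (n : ℕ) → CD n
  | 0 => 0
  | n + 1 => (0, e0 n)

/-- The "complexification" `α̃ = (-b, a)` of `α = (a,b)` (junk value `0` for `n = 0`);
note `α̃ = α·ẽ₀`. -/
def tilde : {n : ℕ} → CD n → CD n
  | 0, _ => 0
  | _ + 1, x => (-x.2, x.1)

/-- The standard inner product on `A n ≅ ℝ^{2^n}`. -/
protected def inner : {n : ℕ} → CD n → CD n → ℝ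
  | 0, x, y => (show ℝ from x) * (show ℝ from y)
  | _ + 1, x, y => CD.inner x.1 y.1 + CD.inner x.2 y.2

/-- The euclidean norm on `A n`. -/
protected def norm {n : ℕ} (x : CD n) : ℝ := Real.sqrt (CD.inner x x)

/-- `x` is pure if its trace `t(x) = x + x̄` vanishes. -/
def IsPure {n : ℕ} (x : CD n) : Prop := x + CD.conj x = 0

/-- `x = (a,b)` is doubly pure if both `a` and `b` are pure
(equivalently, both `x` and `x̃` are pure). -/
def IsDoublyPure : {n : ℕ} → CD n → Prop
  | 0, x => x = 0
  | _ + 1, x => IsPure x.1 ∧ IsPure x.2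

/-- The associator `(x,y,z) = (xy)z - x(yz)`. -/
def assoc {n : ℕ} (x y z : CD n) : CD n := (x * y) * z - x * (y * z)

/-- The subspace `ℍ_a`: the real span of `{e₀, ã, a, ẽ₀}`. -/
def Ha {n : ℕ} (a : CD n) : Submodule ℝ (CD n) :=
  Submodule.span ℝ {e0 n, tilde a, a, te0 n}

/-- The orthogonal complement `ℍ_a^⊥` of `ℍ_a` in `A n`. -/
def HaPerp {n : ℕ} (a : CD n) : Set (CD n) :=
  {x | ∀ y ∈ Ha a, CD.inner x y = 0}

/-- The element `ε = (ẽ₀, 0)` of `A (n+1)`. -/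
def eps (n : ℕ) : CD (n + 1) := (te0 n, 0)

/-- `α̂ = (b,a)` for `α = (a,b) ∈ A (n+1)`. -/
def hat {n : ℕ} (x : CD (n + 1)) : CD (n + 1) := (x.2, x.1)

/-- The element `(a, b)` of `A (n+1) = A n × A n`. -/
def pair {n : ℕ} (a b : CD n) : CD (n + 1) := (a, b)

end CD

/-- An algebra monomorphism `A m → A n`: an injective `ℝ`-linear map preserving
the unit and multiplication. -/
def IsMono {m n : ℕ} (φ : CD m →ₗ[ℝ] CD n) : Prop :=
  Function.Injective φ ∧ φ (CD.e0 m) = CD.e0 n ∧ ∀ x y, φ (x * y) = φ x * φ y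


namespace CD

variable {n : ℕ}

/-- `CD 0` is definitionally `ℝ`. -/
def r0 (x : CD 0) : ℝ := x

lemma add_pair (x y : CD (n+1)) : x + y = (x.1 + y.1, x.2 + y.2) := rfl
lemma smul_pair (r : ℝ) (x : CD (n+1)) : r • x = (r • x.1, r • x.2) := rfl
lemma neg_pair (x : CD (n+1)) : -x = (-x.1, -x.2) := rfl
lemma sub_pair (x y : CD (n+1)) : x - y = (x.1 - y.1, x.2 - y.2) := rfl
lemma zero_pair : (0 : CD (n+1)) = ((0 : CD n), (0 : CD n)) := rfl
lemma conj_pair (x : CD (n+1)) : CD.conj x = (CD.conj x.1, -x.2) := rfl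
lemma mul_pair (x y : CD (n+1)) :
    x * y = (x.1 * y.1 - CD.conj y.2 * x.2, y.2 * x.1 + x.2 * CD.conj y.1) := rfl
lemma inner_pair (x y : CD (n+1)) :
    CD.inner x y = CD.inner x.1 y.1 + CD.inner x.2 y.2 := rfl
lemma mul0 (x y : CD 0) : x * y = r0 x * r0 y := rfl
lemma inner0 (x y : CD 0) : CD.inner x y = r0 x * r0 y := rfl
lemma conj0 (x : CD 0) : CD.conj x = x := rfl
lemma smul0 (r : ℝ) (x : CD 0) : r • x = r * r0 x := rfl

lemma conj_add : ∀ {n : ℕ} (x y : CD n), CD.conj (x + y) = CD.conj x + CD.conj y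
  | 0, _, _ => rfl
  | n+1, x, y => by
    erw [add_pair, conj_pair, conj_pair x, conj_pair y, add_pair]
    simp only [conj_add, neg_add]
    exact rfl

lemma conj_smul : ∀ {n : ℕ} (r : ℝ) (x : CD n), CD.conj (r • x) = r • CD.conj x
  | 0, _, _ => rfl
  | n+1, r, x => by
    erw [smul_pair, conj_pair, conj_pair x, smul_pair]
    simp only [conj_smul, smul_neg]
    exact rfl

lemma conj_zero : ∀ {n : ℕ}, CD.conj (0 : CD n) = 0
  | 0 => rfl
  | n+1 => by erw [zero_pair, conj_pair]; simp [conj_zero]; exact rfl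

lemma conj_neg {n : ℕ} (x : CD n) : CD.conj (-x) = -CD.conj x := by
  rw [← neg_one_smul ℝ x, conj_smul, neg_one_smul]

lemma conj_conj : ∀ {n : ℕ} (x : CD n), CD.conj (CD.conj x) = x
  | 0, _ => rfl
  | n+1, x => by erw [conj_pair, conj_pair]; simp [conj_conj]; exact rfl

lemma conj_e0 : ∀ {n : ℕ}, CD.conj (e0 n) = e0 n
  | 0 => rfl
  | n+1 => by erw [e0, conj_pair]; simp [conj_e0]; exact rfl

lemma zero_mul_mul_zero : ∀ (n : ℕ),
    (∀ x : CD n, (0 : CD n) * x = 0) ∧ (∀ x : CD n, x * (0 : CD n) = 0) := by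
  intro n
  induction n with
  | zero =>
    exact ⟨fun x => zero_mul (r0 x), fun x => mul_zero (r0 x)⟩
  | succ n ih =>
    constructor <;> intro x <;>
      erw [zero_pair, mul_pair] <;>
      simp only [ih.1, ih.2, conj_zero, sub_zero, zero_add, add_zero, zero_sub, neg_zero,
        Prod.mk.injEq] <;> exact rfl

lemma zero_mul' (x : CD n) : (0 : CD n) * x = 0 := (zero_mul_mul_zero n).1 x
lemma mul_zero' (x : CD n) : x * (0 : CD n) = 0 := (zero_mul_mul_zero n).2 x

lemma add_mul_mul_add : ∀ (n : ℕ),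
    (∀ x y z : CD n, (x + y) * z = x * z + y * z) ∧
    (∀ x y z : CD n, x * (y + z) = x * y + x * z) := by
  intro n
  induction n with
  | zero =>
    exact ⟨fun x y z => add_mul (r0 x) (r0 y) (r0 z),
           fun x y z => mul_add (r0 x) (r0 y) (r0 z)⟩
  | succ n ih =>
    constructor <;> intro x y z <;>
      erw [add_pair, mul_pair, mul_pair, mul_pair] <;>
      simp only [ih.1, ih.2, conj_add, add_pair] <;>
      exact Prod.ext (by show _ = _ + _; dsimp only; abel) (by show _ = _ + _; dsimp only; abel)

lemma add_mul' (x y z : CD n) : (x + y) * z = x * z + y * z := (add_mul_mul_add n).1 x y z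
lemma mul_add' (x y z : CD n) : x * (y + z) = x * y + x * z := (add_mul_mul_add n).2 x y z

lemma smul_mul_mul_smul : ∀ (n : ℕ),
    (∀ (r : ℝ) (x y : CD n), (r • x) * y = r • (x * y)) ∧
    (∀ (r : ℝ) (x y : CD n), x * (r • y) = r • (x * y)) := by
  intro n
  induction n with
  | zero =>
    constructor <;> intro r x y <;>
      · show _ = r * (r0 x * r0 y)
        rw [mul0]
        first
        | (show r * r0 x * r0 y = r * (r0 x * r0 y); ring)
        | (show r0 x * (r * r0 y) = r * (r0 x * r0 y); ring)
  | succ n ih =>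
    constructor <;> intro r x y <;>
      erw [smul_pair, mul_pair, mul_pair, smul_pair] <;>
      simp only [ih.1, ih.2, conj_smul, smul_sub, smul_add, Prod.mk.injEq] <;>
      exact rfl

lemma smul_mul' (r : ℝ) (x y : CD n) : (r • x) * y = r • (x * y) := (smul_mul_mul_smul n).1 r x y
lemma mul_smul' (r : ℝ) (x y : CD n) : x * (r • y) = r • (x * y) := (smul_mul_mul_smul n).2 r x y

lemma neg_mul' (x y : CD n) : (-x) * y = -(x * y) := by
  rw [← neg_one_smul ℝ x, smul_mul', neg_one_smul]

lemma mul_neg' (x y : CD n) : x * (-y) = -(x * y) := by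
  rw [← neg_one_smul ℝ y, mul_smul', neg_one_smul]

lemma sub_mul' (x y z : CD n) : (x - y) * z = x * z - y * z := by
  rw [sub_eq_add_neg, add_mul', neg_mul', sub_eq_add_neg]

lemma mul_sub' (x y z : CD n) : x * (y - z) = x * y - x * z := by
  rw [sub_eq_add_neg, mul_add', mul_neg', sub_eq_add_neg]

lemma mul_e0 : ∀ {n : ℕ} (x : CD n), x * e0 n = x
  | 0, x => mul_one (r0 x)
  | n+1, x => by
    erw [e0, mul_pair]
    simp only [conj_zero, conj_e0, zero_mul', mul_e0, sub_zero, zero_add, Prod.mk.eta]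
    exact rfl

lemma e0_mul : ∀ {n : ℕ} (x : CD n), e0 n * x = x
  | 0, x => one_mul (r0 x)
  | n+1, x => by
    erw [e0, mul_pair]
    simp only [e0_mul, mul_e0, mul_zero', zero_mul', sub_zero, add_zero, zero_add, conj_e0,
      Prod.mk.eta]
    exact rfl

lemma inner_comm : ∀ {n : ℕ} (x y : CD n), CD.inner x y = CD.inner y x
  | 0, x, y => mul_comm (r0 x) (r0 y)
  | n+1, x, y => by rw [inner_pair, inner_pair, inner_comm x.1, inner_comm x.2]

lemma inner_add_left : ∀ {n : ℕ} (x y z : CD n),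
    CD.inner (x + y) z = CD.inner x z + CD.inner y z
  | 0, x, y, z => add_mul (r0 x) (r0 y) (r0 z)
  | n+1, x, y, z => by
    erw [add_pair, inner_pair, inner_pair, inner_pair]
    simp only [inner_add_left]; ring

lemma inner_smul_left : ∀ {n : ℕ} (r : ℝ) (x y : CD n),
    CD.inner (r • x) y = r * CD.inner x y
  | 0, r, x, y => mul_assoc r (r0 x) (r0 y)
  | n+1, r, x, y => by
    erw [smul_pair, inner_pair, inner_pair]
    simp only [inner_smul_left]; ring

lemma inner_neg_left (x y : CD n) : CD.inner (-x) y = -CD.inner x y := by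
  rw [← neg_one_smul ℝ x, inner_smul_left]; ring

lemma inner_neg_right (x y : CD n) : CD.inner x (-y) = -CD.inner x y := by
  rw [inner_comm, inner_neg_left, inner_comm]

lemma inner_zero_right : ∀ {n : ℕ} (x : CD n), CD.inner x 0 = 0
  | 0, x => mul_zero (r0 x)
  | n+1, x => by erw [zero_pair, inner_pair]; simp only [inner_zero_right, add_zero]

lemma inner_e0_e0 : ∀ {n : ℕ}, CD.inner (e0 n) (e0 n) = 1
  | 0 => mul_one 1
  | n+1 => by erw [e0, inner_pair]; simp only [inner_e0_e0, inner_zero_right, add_zero]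

lemma inner_conj_conj : ∀ {n : ℕ} (x : CD n),
    CD.inner (CD.conj x) (CD.conj x) = CD.inner x x
  | 0, x => rfl
  | n+1, x => by
    erw [conj_pair, inner_pair, inner_pair]
    rw [inner_conj_conj, inner_neg_left, inner_neg_right]
    ring

lemma trace_eq : ∀ {n : ℕ} (x : CD n),
    x + CD.conj x = (2 * CD.inner x (e0 n)) • e0 n
  | 0, x => show r0 x + r0 x = (2 * (r0 x * 1)) * 1 by ring
  | n+1, x => by
    erw [conj_pair, add_pair, e0, inner_pair, smul_pair]
    simp only [inner_zero_right, add_zero, trace_eq x.1, add_neg_cancel, smul_zero]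
    exact rfl

lemma conj_mul_self : ∀ {n : ℕ} (x : CD n), CD.conj x * x = CD.inner x x • e0 n
  | 0, x => show r0 x * r0 x = (r0 x * r0 x) * 1 by ring
  | n+1, x => by
    erw [conj_pair, mul_pair, e0, inner_pair, smul_pair]
    simp only [conj_neg, neg_mul', mul_neg', sub_neg_eq_add, conj_conj, smul_zero]
    rw [conj_mul_self x.1, conj_mul_self x.2]
    exact Prod.ext ((add_smul _ _ _).symm) (by simp)

lemma mul_conj_self (x : CD n) : x * CD.conj x = CD.inner x x • e0 n := by
  have h := conj_mul_self (CD.conj x)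
  rw [conj_conj, inner_conj_conj] at h
  exact h

lemma pure_inner_e0 {x : CD n} (h : IsPure x) : CD.inner x (e0 n) = 0 := by
  have h2 := trace_eq x
  rw [h] at h2
  have h3 := congrArg (fun z => CD.inner z (e0 n)) h2
  simp only [inner_smul_left, inner_e0_e0, mul_one] at h3
  have h0 : CD.inner (0 : CD n) (e0 n) = 0 := by
    rw [← zero_smul ℝ (e0 n), inner_smul_left]; ring
  rw [h0] at h3
  linarith

lemma e0_ne_zero : e0 n ≠ 0 := by
  intro h
  have := inner_e0_e0 (n := n)
  rw [h, inner_zero_right] at this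
  norm_num at this

lemma smul_e0_inj {r s : ℝ} (h : r • e0 n = s • e0 n) : r = s := by
  have := congrArg (fun z => CD.inner z (e0 n)) h
  simpa [inner_smul_left, inner_e0_e0] using this

lemma pure_sq {w : CD n} (hp : IsPure w) (h1 : CD.inner w w = 1) :
    w * w = -(e0 n) := by
  have hc : CD.conj w = -w := by
    have := hp
    unfold IsPure at this
    linear_combination (norm := abel) this
  have h2 := mul_conj_self w
  rw [hc, mul_neg', h1, one_smul] at h2
  linear_combination (norm := abel) -h2

lemma norm_one_inner {w : CD n} (h : CD.norm w = 1) : CD.inner w w = 1 := by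
  have := h
  unfold CD.norm at this
  exact (Real.sqrt_eq_one.mp this)

@[simp] lemma r0_add (a b : CD 0) : r0 (a + b) = r0 a + r0 b := rfl
@[simp] lemma r0_sub (a b : CD 0) : r0 (a - b) = r0 a - r0 b := rfl
@[simp] lemma r0_neg (a : CD 0) : r0 (-a) = -r0 a := rfl
@[simp] lemma r0_mul (a b : CD 0) : r0 (a * b) = r0 a * r0 b := rfl
@[simp] lemma r0_conj (a : CD 0) : r0 (CD.conj a) = r0 a := rfl
@[simp] lemma r0_zero : r0 0 = 0 := rfl
@[simp] lemma r0_e0 : r0 (e0 0) = 1 := rfl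
@[simp] lemma r0_smul (r : ℝ) (a : CD 0) : r0 (r • a) = r * r0 a := rfl

/-- The embedding `φ_w : A 1 → A n`, `(r,s) ↦ r e₀ + s w`. -/
def phiW (w : CD n) : CD 1 →ₗ[ℝ] CD n where
  toFun x := r0 x.1 • e0 n + r0 x.2 • w
  map_add' x y := by
    rw [add_pair]
    show (r0 (x.1 + y.1)) • e0 n + (r0 (x.2 + y.2)) • w = _
    rw [r0_add, r0_add, add_smul, add_smul]
    abel
  map_smul' r x := by
    rw [smul_pair]
    show (r0 (r • x.1)) • e0 n + (r0 (r • x.2)) • w = _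
    rw [r0_smul, r0_smul, mul_smul, mul_smul, RingHom.id_apply, smul_add]

lemma phiW_apply (w : CD n) (x : CD 1) :
    phiW w x = r0 x.1 • e0 n + r0 x.2 • w := rfl

lemma decomp1 (x : CD 1) :
    x = r0 x.1 • e0 1 + r0 x.2 • te0 1 := by
  erw [e0, te0, smul_pair, smul_pair, add_pair]
  refine Prod.ext ?_ ?_
  · show x.1 = r0 x.1 • e0 0 + r0 x.2 • (0 : CD 0)
    rw [smul0, smul0]
    show r0 x.1 = r0 x.1 * 1 + r0 x.2 * 0
    ring
  · show x.2 = r0 x.1 • (0 : CD 0) + r0 x.2 • e0 0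
    rw [smul0, smul0]
    show r0 x.2 = r0 x.1 * 0 + r0 x.2 * 1
    ring

lemma te0_sq' : ∀ n : ℕ, te0 (n+1) * te0 (n+1) = -(e0 (n+1)) := by
  intro n
  erw [te0, mul_pair, e0, neg_pair]
  refine Prod.ext ?_ ?_
  · show (0 : CD n) * 0 - CD.conj (e0 n) * e0 n = -(e0 n)
    rw [zero_mul', conj_e0, e0_mul, zero_sub]
  · show e0 n * 0 + e0 n * CD.conj 0 = -(0 : CD n)
    rw [conj_zero, mul_zero', add_zero, neg_zero]

lemma phiW_mono (w : CD n) (hp : IsPure w) (hn : CD.norm w = 1) : IsMono (phiW w) := by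
  have hww : w * w = -(e0 n) := pure_sq hp (norm_one_inner hn)
  have hwe : CD.inner w (e0 n) = 0 := pure_inner_e0 hp
  have hew : CD.inner (e0 n) w = 0 := by rw [inner_comm]; exact hwe
  refine ⟨?_, ?_, ?_⟩
  · intro x y hxy
    rw [phiW_apply, phiW_apply] at hxy
    have h1 := congrArg (fun z => CD.inner z (e0 n)) hxy
    have h2 := congrArg (fun z => CD.inner z w) hxy
    simp only [inner_add_left, inner_smul_left, inner_e0_e0, hwe, hew,
      norm_one_inner hn, mul_one, mul_zero, add_zero, zero_add] at h1 h2
    rw [decomp1 x, decomp1 y, h1, h2]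
  · rw [phiW_apply, e0]
    show r0 (e0 0) • e0 n + r0 (0 : CD 0) • w = e0 n
    rw [r0_e0, r0_zero, one_smul, zero_smul, add_zero]
  · intro x y
    rw [phiW_apply, phiW_apply, phiW_apply, mul_pair]
    simp only [r0_sub, r0_add, r0_mul, r0_conj]
    simp only [mul_add', add_mul', smul_mul', mul_smul', e0_mul, mul_e0, hww, smul_smul,
      smul_neg, smul_add, sub_smul, add_smul]
    module

lemma mono_structure (φ : CD 1 →ₗ[ℝ] CD n) (hφ : IsMono φ) :
    IsPure (φ (te0 1)) ∧ CD.norm (φ (te0 1)) = 1 ∧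
      ∀ x : CD 1, φ x = r0 x.1 • e0 n + r0 x.2 • φ (te0 1) := by
  obtain ⟨hinj, he0, hmul⟩ := hφ
  set w := φ (te0 1) with hw
  have hwsq : w * w = -(e0 n) := by
    rw [hw, ← hmul, te0_sq' 0, map_neg, he0]
  set t := CD.inner w (e0 n) with ht
  set q := CD.inner w w with hq
  have htr : w + CD.conj w = (2 * t) • e0 n := trace_eq w
  have hconj : CD.conj w = (2 * t) • e0 n - w := by
    linear_combination (norm := abel) htr
  have hmc : w * CD.conj w = q • e0 n := mul_conj_self w
  have keyA : (2 * t) • w = (q - 1) • e0 n := by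
    rw [hconj, mul_sub', mul_smul', mul_e0, hwsq] at hmc
    rw [sub_smul, one_smul]
    linear_combination (norm := abel) hmc
  have inner0e : CD.inner (0 : CD n) (e0 n) = 0 := by
    rw [← zero_smul ℝ (e0 n), inner_smul_left]; ring
  have ht0 : t = 0 := by
    by_contra hne
    have h2t : (2 * t) ≠ 0 := by
      intro h; exact hne (by linarith)
    have hw' : w = ((q - 1) / (2 * t)) • e0 n := by
      have h := congrArg (fun z => ((2 * t)⁻¹ : ℝ) • z) keyA
      simp only [smul_smul, inv_mul_cancel₀ h2t, one_smul] at h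
      rw [h]
      congr 1
      ring
    set c := (q - 1) / (2 * t) with hc
    have hce : (c * c) • e0 n = -(e0 n) := by
      rw [← hwsq, hw', smul_mul', mul_smul', e0_mul, smul_smul]
    have h2 : c * c = -1 := by
      have h := congrArg (fun z => CD.inner z (e0 n)) hce
      simp only [inner_smul_left, inner_e0_e0, mul_one, inner_neg_left] at h
      linarith
    nlinarith [sq_nonneg c]
  have hpure : IsPure w := by
    unfold IsPure
    rw [htr, ht0, mul_zero, zero_smul]
  have hq1 : q = 1 := by
    rw [ht0, mul_zero, zero_smul] at keyA
    have h := congrArg (fun z => CD.inner z (e0 n)) keyA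
    simp only [inner_smul_left, inner_e0_e0, mul_one, inner0e] at h
    linarith
  refine ⟨hpure, ?_, ?_⟩
  · unfold CD.norm
    rw [← hq, hq1, Real.sqrt_one]
  · intro x
    conv_lhs => rw [decomp1 x]
    rw [map_add, map_smul, map_smul, he0, hw]

end CD

namespace CD
lemma phiW_te0 {n : ℕ} (w : CD n) : phiW w (te0 1) = w := by
  rw [phiW_apply, te0]
  show r0 (0 : CD 0) • e0 n + r0 (e0 0) • w = w
  rw [r0_zero, r0_e0, zero_smul, one_smul, zero_add]
end CD

/-- For `n ≥ 1`, the algebra monomorphisms `A 1 = ℂ → A n` are exactly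
the maps `φ_w(re₀ + se₁) = re₀ + sw` for `w` pure with `‖w‖ = 1`; hence
`𝓜(A 1; A n)` is in bijection with the unit sphere of the pure part of `A n`.
(Here `e₁ = ẽ₀ ∈ A 1`, and `x = (x.1, x.2) = x.1·e₀ + x.2·e₁` for `x ∈ A 1 = ℝ × ℝ`.) -/
theorem statement16 (n : ℕ) (hn : 1 ≤ n) :
    (∀ w : CD n, CD.IsPure w → CD.norm w = 1 →
      ∃ φ : CD 1 →ₗ[ℝ] CD n, IsMono φ ∧
        ∀ x : CD 1, φ x = (show ℝ from x.1) • CD.e0 n + (show ℝ from x.2) • w) ∧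
    (∀ φ : CD 1 →ₗ[ℝ] CD n, IsMono φ →
      CD.IsPure (φ (CD.te0 1)) ∧ CD.norm (φ (CD.te0 1)) = 1 ∧
      ∀ x : CD 1, φ x =
        (show ℝ from x.1) • CD.e0 n + (show ℝ from x.2) • φ (CD.te0 1)) ∧
    (∃ F : {w : CD n // CD.IsPure w ∧ CD.norm w = 1} →
        {φ : CD 1 →ₗ[ℝ] CD n // IsMono φ},
      Function.Bijective F ∧ ∀ w, (F w : CD 1 →ₗ[ℝ] CD n) (CD.te0 1) = (w : CD n)) := by
  refine ⟨?_, ?_, ?_⟩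
  · intro w hp hn1
    exact ⟨CD.phiW w, CD.phiW_mono w hp hn1, fun x => rfl⟩
  · intro φ hφ
    obtain ⟨h1, h2, h3⟩ := CD.mono_structure φ hφ
    exact ⟨h1, h2, fun x => h3 x⟩
  · refine ⟨fun w => ⟨CD.phiW w.1, CD.phiW_mono w.1 w.2.1 w.2.2⟩, ⟨?_, ?_⟩, ?_⟩
    · intro a b hab
      apply Subtype.ext
      have h := congrArg (fun ψ : {φ : CD 1 →ₗ[ℝ] CD n // IsMono φ} =>
        (ψ : CD 1 →ₗ[ℝ] CD n) (CD.te0 1)) hab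
      simpa [CD.phiW_te0] using h
    · rintro ⟨φ, hφ⟩
      obtain ⟨h1, h2, h3⟩ := CD.mono_structure φ hφ
      refine ⟨⟨φ (CD.te0 1), h1, h2⟩, ?_⟩
      apply Subtype.ext
      apply LinearMap.ext
      intro x
      exact (h3 x).symm
    · intro w
      exact CD.phiW_te0 w.1
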